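/- Fix p, q ∈ ℕ, counts x ∈ ℕ^p, vectors v_1, …, v_p ∈ ℝ^q, a shift a ∈ ℝ^q, a symmetric positive definite Λ ∈ ℝ^{q×q}, a constant c ∈ ℝ, and vectors m ∈ ℝ^q, s ∈ ℝ^q with s_i > 0. Let φ be the product Gaussian measure on ℝ^q with coordinate means m_i and variances s_i, with Lebesgue density g(w) = Π_i (2π s_i)^{-1/2} exp(−(w_i−m_i)²/(2s_i)), and let h_Λ(w) = (2π)^{-q/2} det(Λ)^{-1/2} exp(−(1/2)wᵀΛ^{-1}w). Then the ELBO J := ∫ [ Σ_{j=1}^p ( x_j ⟨v_j, a+w⟩ − exp(⟨v_j, a+w⟩) − log(x_j!) ) + log h_Λ(w) + c ] dφ(w) − ∫ log g(w) dφ(w) equals Σ_{j=1}^p x_j ⟨v_j, a+m⟩ − Σ_{j=1}^p A_j − Σ_{j=1}^p log(x_j!) − (1/2) log det(Λ) − (1/2) mᵀΛ^{-1}m − (1/2) Σ_{i=1}^q (Λ^{-1})_{ii} s_i + (1/2) Σ_{i=1}^q log s_i + q/2 + c, where A_j = exp( ⟨v_j, a+m⟩ + (1/2) Σ_{i=1}^q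 v_{ji}² s_i ). -/

import Mathlib

open MeasureTheory ProbabilityTheory Real Matrix

/-- The product Gaussian measure on `ℝ^q` with coordinate means `m i` and variances `s i`. -/
noncomputable def gaussPi (q : ℕ) (m s : Fin q → ℝ) : Measure (Fin q → ℝ) :=
  Measure.pi fun i => gaussianReal (m i) (s i).toNNReal

open NNReal

namespace PalmAux

lemma int_mul_exp_zero {b : ℝ} (hb : 0 < b) : ∫ x : ℝ, x * exp (-b * x ^ 2) = 0 := by
  have hderiv : ∀ x : ℝ, HasDerivAt (fun y : ℝ => -(2 * b)⁻¹ * exp (-b * y ^ 2))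
      (x * exp (-b * x ^ 2)) x := by
    intro x
    have h1 : HasDerivAt (fun y : ℝ => -b * y ^ 2) (-b * (2 * x)) x := by
      simpa using ((hasDerivAt_pow 2 x).const_mul (-b))
    have h2 := (h1.exp).const_mul (-(2 * b)⁻¹)
    refine h2.congr_deriv ?_
    have hb0 : b ≠ 0 := hb.ne'
    field_simp
  have h0 := integral_eq_zero_of_hasDerivAt_of_integrable hderiv
    (integrable_mul_exp_neg_mul_sq hb)
    (((integrable_exp_neg_mul_sq hb).const_mul _))
  exact h0

lemma integrable_sq_mul_exp {b : ℝ} (hb : 0 < b) :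
    Integrable fun x : ℝ => x ^ 2 * exp (-b * x ^ 2) := by
  have := integrable_rpow_mul_exp_neg_mul_sq hb (s := 2) (by norm_num)
  have heq : ∀ x : ℝ, x ^ (2 : ℝ) = x ^ (2 : ℕ) := fun x => by
    rw [← Real.rpow_natCast x 2]; norm_num
  simpa [heq] using this

lemma int_sq_exp {b : ℝ} (hb : 0 < b) :
    ∫ x : ℝ, x ^ 2 * exp (-b * x ^ 2) = Real.sqrt (π / b) / (2 * b) := by
  have hderiv : ∀ x : ℝ, HasDerivAt (fun y : ℝ => y * exp (-b * y ^ 2))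
      (exp (-b * x ^ 2) - 2 * b * (x ^ 2 * exp (-b * x ^ 2))) x := by
    intro x
    have h1 : HasDerivAt (fun y : ℝ => -b * y ^ 2) (-b * (2 * x)) x := by
      simpa using ((hasDerivAt_pow 2 x).const_mul (-b))
    have h2 := (hasDerivAt_id x).mul h1.exp
    refine h2.congr_deriv ?_
    simp only [id]
    ring
  have hint : Integrable fun x : ℝ =>
      exp (-b * x ^ 2) - 2 * b * (x ^ 2 * exp (-b * x ^ 2)) :=
    (integrable_exp_neg_mul_sq hb).sub ((integrable_sq_mul_exp hb).const_mul _)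
  have h0 := integral_eq_zero_of_hasDerivAt_of_integrable hderiv hint
    (integrable_mul_exp_neg_mul_sq hb)
  rw [integral_sub (integrable_exp_neg_mul_sq hb)
    ((integrable_sq_mul_exp hb).const_mul _), MeasureTheory.integral_const_mul,
    integral_gaussian] at h0
  have h2b : (2 * b) ≠ 0 := by positivity
  field_simp at h0 ⊢
  linarith


lemma integral_gauss (μm : ℝ) {v : ℝ≥0} (hv : v ≠ 0) (f : ℝ → ℝ) :
    ∫ x, f x ∂(gaussianReal μm v) = ∫ x, gaussianPDFReal μm v x * f x := by
  rw [gaussianReal_of_var_ne_zero μm hv]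
  have h : (gaussianPDF μm v)
      = fun x => (((fun y => (gaussianPDFReal μm v y).toNNReal) x : ℝ≥0) : ENNReal) := rfl
  rw [h, integral_withDensity_eq_integral_smul
    ((measurable_gaussianPDFReal μm v).real_toNNReal) f]
  congr 1
  ext x
  simp [NNReal.smul_def, Real.coe_toNNReal _ (gaussianPDFReal_nonneg μm v x)]

lemma integrable_gauss_iff (μm : ℝ) {v : ℝ≥0} (hv : v ≠ 0) (f : ℝ → ℝ) :
    Integrable f (gaussianReal μm v) ↔
      Integrable (fun x => gaussianPDFReal μm v x * f x) volume := by
  rw [gaussianReal_of_var_ne_zero μm hv]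
  have h : (gaussianPDF μm v)
      = fun x => (((fun y => (gaussianPDFReal μm v y).toNNReal) x : ℝ≥0) : ENNReal) := rfl
  rw [h, integrable_withDensity_iff_integrable_smul
    ((measurable_gaussianPDFReal μm v).real_toNNReal)]
  constructor <;> intro hh <;> refine hh.congr (Filter.Eventually.of_forall fun x => ?_) <;>
    simp [NNReal.smul_def, Real.coe_toNNReal _ (gaussianPDFReal_nonneg μm v x)]

variable {μm sv : ℝ}

lemma pdf_eq (hsv : 0 < sv) (x : ℝ) :
    gaussianPDFReal μm sv.toNNReal x
      = (Real.sqrt (2 * π * sv))⁻¹ * exp (-(2 * sv)⁻¹ * (x - μm) ^ 2) := by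
  rw [gaussianPDFReal]
  rw [Real.coe_toNNReal sv hsv.le]
  congr 1
  rw [neg_div]
  congr 1
  field_simp

lemma norm_const (hsv : 0 < sv) :
    (Real.sqrt (2 * π * sv))⁻¹ * Real.sqrt (π / (2 * sv)⁻¹) = 1 := by
  have h1 : π / (2 * sv)⁻¹ = 2 * π * sv := by field_simp
  rw [h1]
  have : Real.sqrt (2 * π * sv) ≠ 0 := by positivity
  exact inv_mul_cancel₀ this

lemma vne (hsv : 0 < sv) : sv.toNNReal ≠ 0 := by
  simp only [ne_eq, Real.toNNReal_eq_zero, not_le]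
  linarith

lemma int_pdf_mul (hsv : 0 < sv) (f : ℝ → ℝ) :
    ∫ x, gaussianPDFReal μm sv.toNNReal x * f x
      = ∫ x, (Real.sqrt (2 * π * sv))⁻¹ * exp (-(2 * sv)⁻¹ * x ^ 2) * f (x + μm) := by
  rw [← integral_add_right_eq_self (fun x => gaussianPDFReal μm sv.toNNReal x * f x) μm]
  congr 1
  ext x
  rw [pdf_eq hsv, add_sub_cancel_right]

lemma integrable_pdf_mul (hsv : 0 < sv) (f : ℝ → ℝ)
    (h : Integrable (fun x =>
      (Real.sqrt (2 * π * sv))⁻¹ * exp (-(2 * sv)⁻¹ * x ^ 2) * f (x + μm))) :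
    Integrable (fun x => gaussianPDFReal μm sv.toNNReal x * f x) := by
  have h2 := h.comp_add_right (-μm)
  refine h2.congr (Filter.Eventually.of_forall fun x => ?_)
  have e : x + -μm + μm = x := by ring
  simp only [e]
  rw [pdf_eq hsv, sub_eq_add_neg]

lemma integrable_gauss_id (hsv : 0 < sv) :
    Integrable (fun x : ℝ => x) (gaussianReal μm sv.toNNReal) := by
  rw [integrable_gauss_iff _ (vne hsv)]
  apply integrable_pdf_mul hsv
  have hb : 0 < (2 * sv)⁻¹ := by positivity
  have e : (fun x : ℝ => (Real.sqrt (2 * π * sv))⁻¹ * exp (-(2 * sv)⁻¹ * x ^ 2) * (x + μm))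
      = fun x => (Real.sqrt (2 * π * sv))⁻¹ * (x * exp (-(2 * sv)⁻¹ * x ^ 2))
          + ((Real.sqrt (2 * π * sv))⁻¹ * μm) * exp (-(2 * sv)⁻¹ * x ^ 2) :=
    funext fun x => by ring
  rw [e]
  exact ((integrable_mul_exp_neg_mul_sq hb).const_mul _).add
    ((integrable_exp_neg_mul_sq hb).const_mul _)

lemma integral_gauss_id (hsv : 0 < sv) :
    ∫ x, x ∂(gaussianReal μm sv.toNNReal) = μm := by
  rw [integral_gauss _ (vne hsv), int_pdf_mul hsv]
  have hb : 0 < (2 * sv)⁻¹ := by positivity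
  have e : (fun x : ℝ => (Real.sqrt (2 * π * sv))⁻¹ * exp (-(2 * sv)⁻¹ * x ^ 2) * (x + μm))
      = fun x => (Real.sqrt (2 * π * sv))⁻¹ * (x * exp (-(2 * sv)⁻¹ * x ^ 2))
          + ((Real.sqrt (2 * π * sv))⁻¹ * μm) * exp (-(2 * sv)⁻¹ * x ^ 2) :=
    funext fun x => by ring
  rw [e, integral_add (((integrable_mul_exp_neg_mul_sq hb).const_mul _))
    ((integrable_exp_neg_mul_sq hb).const_mul _),
    MeasureTheory.integral_const_mul, MeasureTheory.integral_const_mul,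
    int_mul_exp_zero hb, integral_gaussian]
  have hn := norm_const hsv
  rw [mul_zero, zero_add]
  linear_combination μm * hn

lemma integrable_gauss_sqdev (hsv : 0 < sv) :
    Integrable (fun x : ℝ => (x - μm) ^ 2) (gaussianReal μm sv.toNNReal) := by
  rw [integrable_gauss_iff _ (vne hsv)]
  apply integrable_pdf_mul hsv
  have hb : 0 < (2 * sv)⁻¹ := by positivity
  have e : (fun x : ℝ => (Real.sqrt (2 * π * sv))⁻¹ * exp (-(2 * sv)⁻¹ * x ^ 2)
        * (x + μm - μm) ^ 2)
      = fun x => (Real.sqrt (2 * π * sv))⁻¹ * (x ^ 2 * exp (-(2 * sv)⁻¹ * x ^ 2)) :=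
    funext fun x => by ring
  rw [e]
  exact (integrable_sq_mul_exp hb).const_mul _

lemma integral_gauss_sqdev (hsv : 0 < sv) :
    ∫ x, (x - μm) ^ 2 ∂(gaussianReal μm sv.toNNReal) = sv := by
  rw [integral_gauss _ (vne hsv), int_pdf_mul hsv]
  have hb : 0 < (2 * sv)⁻¹ := by positivity
  have e : (fun x : ℝ => (Real.sqrt (2 * π * sv))⁻¹ * exp (-(2 * sv)⁻¹ * x ^ 2)
        * (x + μm - μm) ^ 2)
      = fun x => (Real.sqrt (2 * π * sv))⁻¹ * (x ^ 2 * exp (-(2 * sv)⁻¹ * x ^ 2)) :=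
    funext fun x => by ring
  rw [e, MeasureTheory.integral_const_mul, int_sq_exp hb]
  have hn := norm_const hsv
  have hsv' : sv ≠ 0 := ne_of_gt hsv
  have h2 : (2 * (2 * sv)⁻¹) = sv⁻¹ := by field_simp
  rw [div_eq_mul_inv, h2, ← mul_assoc]
  rw [hn, one_mul, inv_inv]


lemma pdf_complete_square (hsv : 0 < sv) (t x : ℝ) :
    gaussianPDFReal μm sv.toNNReal x * exp (t * x)
      = exp (t * μm + t ^ 2 * sv / 2) * gaussianPDFReal (μm + t * sv) sv.toNNReal x := by
  rw [gaussianPDFReal, gaussianPDFReal, Real.coe_toNNReal sv hsv.le]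
  have hsv' : sv ≠ 0 := ne_of_gt hsv
  have harg : -(x - μm) ^ 2 / (2 * sv) + t * x
      = -(x - (μm + t * sv)) ^ 2 / (2 * sv) + (t * μm + t ^ 2 * sv / 2) := by
    field_simp
    ring
  rw [mul_assoc, ← Real.exp_add, harg, Real.exp_add]
  ring

lemma integrable_gauss_exp (hsv : 0 < sv) (t : ℝ) :
    Integrable (fun x : ℝ => exp (t * x)) (gaussianReal μm sv.toNNReal) := by
  rw [integrable_gauss_iff _ (vne hsv)]
  have e : (fun x : ℝ => gaussianPDFReal μm sv.toNNReal x * exp (t * x))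
      = fun x => exp (t * μm + t ^ 2 * sv / 2) * gaussianPDFReal (μm + t * sv) sv.toNNReal x :=
    funext fun x => pdf_complete_square hsv t x
  rw [e]
  exact (integrable_gaussianPDFReal _ _).const_mul _

lemma integral_gauss_exp (hsv : 0 < sv) (t : ℝ) :
    ∫ x, exp (t * x) ∂(gaussianReal μm sv.toNNReal)
      = exp (t * μm + t ^ 2 * sv / 2) := by
  rw [integral_gauss _ (vne hsv)]
  have e : (fun x : ℝ => gaussianPDFReal μm sv.toNNReal x * exp (t * x))
      = fun x => exp (t * μm + t ^ 2 * sv / 2) * gaussianPDFReal (μm + t * sv) sv.toNNReal x :=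
    funext fun x => pdf_complete_square hsv t x
  rw [e, MeasureTheory.integral_const_mul,
    integral_gaussianPDFReal_eq_one _ (vne hsv), mul_one]

lemma integrable_gauss_sq (hsv : 0 < sv) :
    Integrable (fun x : ℝ => x ^ 2) (gaussianReal μm sv.toNNReal) := by
  have e : (fun x : ℝ => x ^ 2)
      = fun x : ℝ => ((x - μm) ^ 2 + (2 * μm) * x) - μm ^ 2 := funext fun x => by ring
  rw [e]
  exact ((integrable_gauss_sqdev hsv).add ((integrable_gauss_id hsv).const_mul _)).sub
    (integrable_const _)

lemma integral_gauss_sq (hsv : 0 < sv) :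
    ∫ x, x ^ 2 ∂(gaussianReal μm sv.toNNReal) = sv + μm ^ 2 := by
  have e : (fun x : ℝ => x ^ 2)
      = fun x : ℝ => ((x - μm) ^ 2 + (2 * μm) * x) - μm ^ 2 := funext fun x => by ring
  have h1 : Integrable (fun x : ℝ => (x - μm) ^ 2 + 2 * μm * x)
      (gaussianReal μm sv.toNNReal) :=
    (integrable_gauss_sqdev hsv).add ((integrable_gauss_id hsv).const_mul _)
  rw [e, integral_sub h1 (integrable_const _),
    integral_add (integrable_gauss_sqdev hsv) ((integrable_gauss_id hsv).const_mul _),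
    MeasureTheory.integral_const_mul, integral_gauss_sqdev hsv, integral_gauss_id hsv,
    integral_const]
  simp
  ring


section PiLemmas

lemma pi_integral_prod {n : ℕ} (μ : Fin n → Measure ℝ) [∀ i, SigmaFinite (μ i)]
    (f : Fin n → ℝ → ℝ) :
    ∫ x : Fin n → ℝ, ∏ i, f i (x i) ∂Measure.pi μ = ∏ i, ∫ y, f i y ∂μ i := by
  induction n with
  | zero => simp [Measure.real, Measure.pi_of_empty]
  | succ n n_ih =>
      calc
        _ = ∫ x : ℝ × (Fin n → ℝ),
            f 0 x.1 * ∏ i : Fin n, f (Fin.succ i) (x.2 i)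
              ∂(μ 0).prod (Measure.pi fun i => μ (Fin.succ i)) := by
          rw [← ((measurePreserving_piFinSuccAbove μ 0).symm).integral_comp']
          simp_rw [MeasurableEquiv.piFinSuccAbove_symm_apply, Fin.insertNthEquiv,
            Fin.prod_univ_succ, Fin.insertNth_zero, Equiv.coe_fn_mk, Fin.cons_succ,
            Fin.zero_succAbove, Fin.cons_zero, cast_eq]
        _ = (∫ y, f 0 y ∂μ 0) * ∏ i : Fin n, ∫ y, f (Fin.succ i) y ∂μ (Fin.succ i) := by
          rw [← n_ih, ← integral_prod_mul]
        _ = ∏ i, ∫ y, f i y ∂μ i := by rw [Fin.prod_univ_succ]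

lemma pi_integrable_prod {n : ℕ} (μ : Fin n → Measure ℝ) [∀ i, IsProbabilityMeasure (μ i)]
    {f : Fin n → ℝ → ℝ} (hf : ∀ i, Integrable (f i) (μ i)) :
    Integrable (fun x : Fin n → ℝ => ∏ i, f i (x i)) (Measure.pi μ) := by
  induction n with
  | zero =>
      simp only [Finset.univ_eq_empty, Finset.prod_empty]
      exact integrable_const 1
  | succ n n_ih =>
      have hmp := (measurePreserving_piFinSuccAbove μ 0).symm
      rw [← hmp.integrable_comp_emb (MeasurableEquiv.measurableEmbedding _)]
      simp_rw [MeasurableEquiv.piFinSuccAbove_symm_apply, Fin.insertNthEquiv,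
        Fin.prod_univ_succ, Fin.insertNth_zero]
      simp only [Fin.zero_succAbove, Function.comp_def, Equiv.coe_fn_mk,
        Fin.cons_zero, Fin.cons_succ]
      have hrest : Integrable (fun x : Fin n → ℝ => ∏ i : Fin n, f (Fin.succ i) (x i))
          (Measure.pi fun i => μ (Fin.succ i)) := n_ih _ (fun i => hf _)
      exact Integrable.mul_prod (hf 0) hrest

variable {n : ℕ} (μ : Fin n → Measure ℝ) [∀ i, IsProbabilityMeasure (μ i)]

lemma pi_integrable_eval {f : ℝ → ℝ} (i : Fin n) (hf : Integrable f (μ i)) :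
    Integrable (fun x : Fin n → ℝ => f (x i)) (Measure.pi μ) := by
  have h := pi_integrable_prod μ (f := fun k => if k = i then f else fun _ => (1:ℝ))
    (fun k => by
      by_cases hk : k = i
      · subst hk; simpa using hf
      · simpa [hk] using integrable_const (μ := μ k) (1:ℝ))
  refine h.congr (Filter.Eventually.of_forall fun x => ?_)
  dsimp only
  rw [Finset.prod_eq_single i]
  · simp
  · intro k _ hk; simp [hk]
  · simp

lemma pi_integral_eval (f : ℝ → ℝ) (i : Fin n) :
    ∫ x : Fin n → ℝ, f (x i) ∂Measure.pi μ = ∫ y, f y ∂μ i := by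
  have h := pi_integral_prod μ (fun k => if k = i then f else fun _ => (1:ℝ))
  have hL : ∀ x : Fin n → ℝ,
      (∏ k, (if k = i then f else fun _ => (1:ℝ)) (x k)) = f (x i) := by
    intro x
    rw [Finset.prod_eq_single i]
    · simp
    · intro k _ hk; simp [hk]
    · simp
  have hR : (∏ k, ∫ y, (if k = i then f else fun _ => (1:ℝ)) y ∂μ k) = ∫ y, f y ∂μ i := by
    rw [Finset.prod_eq_single i]
    · simp
    · intro k _ hk; simp [hk]
    · simp
  simp only [hL, hR] at h
  exact h

variable {i k : Fin n} {f g : ℝ → ℝ}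

lemma pi_integrable_pair (hik : i ≠ k) (hf : Integrable f (μ i)) (hg : Integrable g (μ k)) :
    Integrable (fun x : Fin n → ℝ => f (x i) * g (x k)) (Measure.pi μ) := by
  have h := pi_integrable_prod μ
    (f := fun l => fun t => (if l = i then f t else 1) * (if l = k then g t else 1))
    (fun l => by
      by_cases hl : l = i
      · subst hl
        simp only [if_pos rfl, if_neg hik]
        simpa using hf
      · by_cases hl' : l = k
        · subst hl'
          simp only [if_neg hl, if_pos rfl]
          simpa using hg
        · simp only [if_neg hl, if_neg hl']
          simpa using integrable_const (μ := μ l) (1:ℝ))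
  refine h.congr (Filter.Eventually.of_forall fun x => ?_)
  dsimp only
  simp only [Finset.prod_mul_distrib]
  rw [Finset.prod_ite_eq' Finset.univ i (fun l => f (x l)),
    Finset.prod_ite_eq' Finset.univ k (fun l => g (x l))]
  simp

lemma pi_integral_pair (hik : i ≠ k) :
    ∫ x : Fin n → ℝ, f (x i) * g (x k) ∂Measure.pi μ
      = (∫ y, f y ∂μ i) * ∫ y, g y ∂μ k := by
  have h := pi_integral_prod μ
    (fun l => fun t => (if l = i then f t else 1) * (if l = k then g t else 1))
  have hL : ∀ x : Fin n → ℝ,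
      (∏ l, (if l = i then f (x l) else 1) * (if l = k then g (x l) else 1))
        = f (x i) * g (x k) := by
    intro x
    simp only [Finset.prod_mul_distrib]
    rw [Finset.prod_ite_eq' Finset.univ i (fun l => f (x l)),
      Finset.prod_ite_eq' Finset.univ k (fun l => g (x l))]
    simp
  have hR : (∏ l, ∫ y, (if l = i then f y else 1) * (if l = k then g y else 1) ∂μ l)
      = (∫ y, f y ∂μ i) * ∫ y, g y ∂μ k := by
    have hval : ∀ l, (∫ y, (if l = i then f y else 1) * (if l = k then g y else 1) ∂μ l)
        = (if l = i then ∫ y, f y ∂μ i else 1) * (if l = k then ∫ y, g y ∂μ k else 1) := by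
      intro l
      by_cases hl : l = i
      · subst hl
        simp only [if_pos rfl, if_neg hik]
        simp
      · by_cases hl' : l = k
        · subst hl'
          simp only [if_neg hl, if_pos rfl]
          simp
        · simp only [if_neg hl, if_neg hl']
          simp
    simp only [hval, Finset.prod_mul_distrib]
    rw [Finset.prod_ite_eq' Finset.univ i (fun _ => ∫ y, f y ∂μ i),
      Finset.prod_ite_eq' Finset.univ k (fun _ => ∫ y, g y ∂μ k)]
    simp
  simp only [hL, hR] at h
  exact h

end PiLemmas


end PalmAux

noncomputable def gaussPi' (q : ℕ) (m s : Fin q → ℝ) : Measure (Fin q → ℝ) :=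
  Measure.pi fun i => gaussianReal (m i) (s i).toNNReal

namespace PalmAux

section Glue

variable {q : ℕ} {m s : Fin q → ℝ}

instance : IsProbabilityMeasure (gaussPi' q m s) := by
  unfold gaussPi'
  infer_instance

variable (hs : ∀ i, 0 < s i)

include hs

lemma nu_int_id (i : Fin q) : Integrable (fun w : Fin q → ℝ => w i) (gaussPi' q m s) := by
  unfold gaussPi'
  exact pi_integrable_eval (fun i => gaussianReal (m i) (s i).toNNReal) i (integrable_gauss_id (hs i))

lemma nu_id (i : Fin q) : ∫ w : Fin q → ℝ, w i ∂gaussPi' q m s = m i := by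
  unfold gaussPi'
  exact (pi_integral_eval _ (fun y => y) i).trans (integral_gauss_id (hs i))

lemma nu_int_pair (i k : Fin q) :
    Integrable (fun w : Fin q → ℝ => w i * w k) (gaussPi' q m s) := by
  unfold gaussPi'
  by_cases hik : i = k
  · subst hik
    have h : Integrable (fun w : Fin q → ℝ => (w i) ^ 2)
        (Measure.pi fun i => gaussianReal (m i) (s i).toNNReal) :=
      pi_integrable_eval (fun i => gaussianReal (m i) (s i).toNNReal) i (integrable_gauss_sq (hs i))
    exact h.congr (Filter.Eventually.of_forall fun w => by ring)
  · exact pi_integrable_pair (fun i => gaussianReal (m i) (s i).toNNReal) hik (integrable_gauss_id (hs i)) (integrable_gauss_id (hs k))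

lemma nu_pair (i k : Fin q) :
    ∫ w : Fin q → ℝ, w i * w k ∂gaussPi' q m s
      = m i * m k + if i = k then s i else 0 := by
  unfold gaussPi'
  by_cases hik : i = k
  · subst hik
    have h1 : ∫ w : Fin q → ℝ, w i * w i
          ∂(Measure.pi fun i => gaussianReal (m i) (s i).toNNReal)
        = ∫ w : Fin q → ℝ, (w i) ^ 2
          ∂(Measure.pi fun i => gaussianReal (m i) (s i).toNNReal) :=
      integral_congr_ae (Filter.Eventually.of_forall fun w => by ring)
    have h2 : ∫ w : Fin q → ℝ, (w i) ^ 2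
          ∂(Measure.pi fun i => gaussianReal (m i) (s i).toNNReal)
        = ∫ y, y ^ 2 ∂gaussianReal (m i) (s i).toNNReal :=
      pi_integral_eval _ (fun y => y ^ 2) i
    rw [h1, h2, integral_gauss_sq (hs i), if_pos rfl]
    ring
  · have h : ∫ w : Fin q → ℝ, w i * w k
          ∂(Measure.pi fun i => gaussianReal (m i) (s i).toNNReal)
        = (∫ y, y ∂gaussianReal (m i) (s i).toNNReal)
          * ∫ y, y ∂gaussianReal (m k) (s k).toNNReal :=
      pi_integral_pair (fun i => gaussianReal (m i) (s i).toNNReal)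
        (f := fun y => y) (g := fun y => y) hik
    rw [h, integral_gauss_id (hs i), integral_gauss_id (hs k), if_neg hik, add_zero]

lemma nu_int_sqdev (i : Fin q) :
    Integrable (fun w : Fin q → ℝ => (w i - m i) ^ 2) (gaussPi' q m s) := by
  unfold gaussPi'
  exact pi_integrable_eval (fun i => gaussianReal (m i) (s i).toNNReal) i (integrable_gauss_sqdev (hs i))

lemma nu_sqdev (i : Fin q) :
    ∫ w : Fin q → ℝ, (w i - m i) ^ 2 ∂gaussPi' q m s = s i := by
  unfold gaussPi'
  exact (pi_integral_eval _ (fun y => (y - m i) ^ 2) i).trans (integral_gauss_sqdev (hs i))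

lemma nu_int_expprod (t : Fin q → ℝ) :
    Integrable (fun w : Fin q → ℝ => ∏ i, Real.exp (t i * w i)) (gaussPi' q m s) := by
  unfold gaussPi'
  exact pi_integrable_prod _ (f := fun i => fun y => Real.exp (t i * y))
    (fun i => integrable_gauss_exp (hs i) (t i))

lemma nu_expprod (t : Fin q → ℝ) :
    ∫ w : Fin q → ℝ, ∏ i, Real.exp (t i * w i) ∂gaussPi' q m s
      = ∏ i, Real.exp (t i * m i + t i ^ 2 * s i / 2) := by
  unfold gaussPi'
  have h : ∫ w : Fin q → ℝ, ∏ i, Real.exp (t i * w i)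
        ∂(Measure.pi fun i => gaussianReal (m i) (s i).toNNReal)
      = ∏ i, ∫ y, Real.exp (t i * y) ∂gaussianReal (m i) (s i).toNNReal :=
    pi_integral_prod _ (fun i => fun y => Real.exp (t i * y))
  rw [h]
  exact Finset.prod_congr rfl fun i _ => integral_gauss_exp (hs i) (t i)

end Glue

end PalmAux


open PalmAux

/-- Explicit closed-form ELBO (equation (3) of the paper): for the PALM complete-data
log-density `Σ_j (x_j ⟨v_j, a+w⟩ − exp⟨v_j, a+w⟩ − log x_j!) + log h_Λ(w) + c` and the
Gaussian variational distribution `φ = N(m, diag s)` with Lebesgue density `g`, the ELBO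
`E_{W∼φ}[log-joint] − E_{W∼φ}[log g(W)]` equals
`Σ_j x_j⟨v_j,a+m⟩ − Σ_j A_j − Σ_j log x_j! − (1/2) log det Λ − (1/2) mᵀΛ⁻¹m
  − (1/2) Σ_i (Λ⁻¹)_{ii} s_i + (1/2) Σ_i log s_i + q/2 + c`,
where `A_j = exp(⟨v_j,a+m⟩ + (1/2) Σ_i v_{ji}² s_i)`. -/
theorem elbo_closed_form_palm
    (p q : ℕ) (x : Fin p → ℕ) (v : Fin p → Fin q → ℝ) (a : Fin q → ℝ)
    (L : Matrix (Fin q) (Fin q) ℝ) (hLsymm : L.IsSymm) (hLpd : L.PosDef)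
    (c : ℝ) (m : Fin q → ℝ) (s : Fin q → ℝ) (hs : ∀ i, 0 < s i)
    (g hL : (Fin q → ℝ) → ℝ)
    (hg : g = fun w => ∏ i, (Real.sqrt (2 * π * s i))⁻¹ *
      Real.exp (-(w i - m i) ^ 2 / (2 * s i)))
    (hhL : hL = fun w => (2 * π) ^ (-(q : ℝ) / 2) * L.det ^ (-(1 : ℝ) / 2) *
      Real.exp (-(1 / 2) * (w ⬝ᵥ L⁻¹.mulVec w))) :
    (∫ w, ((∑ j, ((x j : ℝ) * (∑ i, v j i * (a i + w i))
          - Real.exp (∑ i, v j i * (a i + w i))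
          - Real.log (Nat.factorial (x j))))
        + Real.log (hL w) + c) ∂(gaussPi q m s))
      - (∫ w, Real.log (g w) ∂(gaussPi q m s)) =
    (∑ j, (x j : ℝ) * (∑ i, v j i * (a i + m i)))
      - (∑ j, Real.exp ((∑ i, v j i * (a i + m i)) + (1 / 2) * ∑ i, (v j i) ^ 2 * s i))
      - (∑ j, Real.log (Nat.factorial (x j)))
      - (1 / 2) * Real.log L.det - (1 / 2) * (m ⬝ᵥ L⁻¹.mulVec m)
      - (1 / 2) * ∑ i, L⁻¹ i i * s i
      + (1 / 2) * ∑ i, Real.log (s i) + (q : ℝ) / 2 + c := by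
  simp only [hg, hhL]
  rw [show gaussPi q m s = gaussPi' q m s from rfl]
  have hdet : 0 < L.det := hLpd.det_pos
  -- pointwise rewriting of log hL
  have hlog : ∀ w : Fin q → ℝ,
      Real.log ((2 * π) ^ (-(q : ℝ) / 2) * L.det ^ (-(1 : ℝ) / 2)
        * Real.exp (-(1 / 2) * (w ⬝ᵥ L⁻¹.mulVec w)))
      = (-(q : ℝ) / 2) * Real.log (2 * π) + (-(1 : ℝ) / 2) * Real.log L.det
        + (-(1 / 2)) * (w ⬝ᵥ L⁻¹.mulVec w) := by
    intro w
    have h1 : (0:ℝ) < (2 * π) ^ (-(q : ℝ) / 2) :=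
      Real.rpow_pos_of_pos (by positivity) _
    have h2 : (0:ℝ) < L.det ^ (-(1 : ℝ) / 2) := Real.rpow_pos_of_pos hdet _
    rw [Real.log_mul (by positivity) (Real.exp_ne_zero _),
      Real.log_mul (ne_of_gt h1) (ne_of_gt h2),
      Real.log_rpow (by positivity), Real.log_rpow hdet, Real.log_exp]
  have hQ : ∀ w : Fin q → ℝ,
      w ⬝ᵥ L⁻¹.mulVec w = ∑ i, ∑ k, L⁻¹ i k * (w i * w k) := by
    intro w
    simp only [dotProduct, Matrix.mulVec, Finset.mul_sum]
    exact Finset.sum_congr rfl fun i _ => Finset.sum_congr rfl fun k _ => by ring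
  -- integrability blocks
  have IQ : ∀ i k : Fin q,
      Integrable (fun w : Fin q → ℝ => L⁻¹ i k * (w i * w k)) (gaussPi' q m s) :=
    fun i k => (nu_int_pair hs i k).const_mul _
  have IQsum : Integrable (fun w : Fin q → ℝ => ∑ i, ∑ k, L⁻¹ i k * (w i * w k))
      (gaussPi' q m s) :=
    integrable_finset_sum _ fun i _ => integrable_finset_sum _ fun k _ => IQ i k
  have Ilin : ∀ j : Fin p, Integrable
      (fun w : Fin q → ℝ => (x j : ℝ) * (∑ i, v j i * (a i + w i))) (gaussPi' q m s) := by
    intro j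
    refine Integrable.const_mul ?_ _
    refine integrable_finset_sum _ fun i _ => ?_
    exact ((integrable_const (a i)).add (nu_int_id hs i)).const_mul _
  have IS1 : Integrable
      (fun w : Fin q → ℝ => ∑ j, (x j : ℝ) * (∑ i, v j i * (a i + w i)))
      (gaussPi' q m s) := integrable_finset_sum _ fun j _ => Ilin j
  have hSj : ∀ (j : Fin p) (w : Fin q → ℝ),
      (∑ i, v j i * (a i + w i)) = (∑ i, v j i * a i) + ∑ i, v j i * w i := by
    intro j w
    rw [← Finset.sum_add_distrib]
    exact Finset.sum_congr rfl fun i _ => by ring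
  have hej : ∀ j : Fin p, (fun w : Fin q → ℝ => Real.exp (∑ i, v j i * (a i + w i)))
      = fun w => Real.exp (∑ i, v j i * a i) * ∏ i, Real.exp (v j i * w i) := by
    intro j
    funext w
    rw [hSj j w, Real.exp_add]
    congr 1
    exact Real.exp_sum _ _
  have Iexpj : ∀ j : Fin p, Integrable
      (fun w : Fin q → ℝ => Real.exp (∑ i, v j i * (a i + w i))) (gaussPi' q m s) := by
    intro j
    rw [hej j]
    exact (nu_int_expprod hs (v j)).const_mul _
  have IS2 : Integrable
      (fun w : Fin q → ℝ => ∑ j, Real.exp (∑ i, v j i * (a i + w i)))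
      (gaussPi' q m s) := integrable_finset_sum _ fun j _ => Iexpj j
  -- values of the elementary integrals
  have Elin : ∀ j : Fin p,
      ∫ w, (x j : ℝ) * (∑ i, v j i * (a i + w i)) ∂gaussPi' q m s
        = (x j : ℝ) * (∑ i, v j i * (a i + m i)) := by
    intro j
    have h0 : ∫ w, (x j : ℝ) * (∑ i, v j i * (a i + w i)) ∂gaussPi' q m s
        = (x j : ℝ) * ∫ w, (∑ i, v j i * (a i + w i)) ∂gaussPi' q m s :=
      MeasureTheory.integral_const_mul _ _
    rw [h0]
    congr 1
    have h1 : ∫ w, (∑ i, v j i * (a i + w i)) ∂gaussPi' q m s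
        = ∑ i, ∫ w, v j i * (a i + w i) ∂gaussPi' q m s :=
      integral_finset_sum _ fun i _ =>
        ((integrable_const (a i)).add (nu_int_id hs i)).const_mul _
    rw [h1]
    refine Finset.sum_congr rfl fun i _ => ?_
    have h2 : ∫ w, v j i * (a i + w i) ∂gaussPi' q m s
        = v j i * ∫ w, (a i + w i) ∂gaussPi' q m s := MeasureTheory.integral_const_mul _ _
    have h3 : ∫ w : Fin q → ℝ, (a i + w i) ∂gaussPi' q m s
        = (∫ _w : Fin q → ℝ, a i ∂gaussPi' q m s) + ∫ w : Fin q → ℝ, w i ∂gaussPi' q m s :=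
      integral_add (integrable_const _) (nu_int_id hs i)
    rw [h2, h3, nu_id hs i, integral_const]
    simp [measure_univ]
  have Eexpj : ∀ j : Fin p,
      ∫ w, Real.exp (∑ i, v j i * (a i + w i)) ∂gaussPi' q m s
        = Real.exp ((∑ i, v j i * (a i + m i)) + (1 / 2) * ∑ i, (v j i) ^ 2 * s i) := by
    intro j
    rw [hej j]
    have h1 : ∫ w : Fin q → ℝ, Real.exp (∑ i, v j i * a i) * ∏ i, Real.exp (v j i * w i)
          ∂gaussPi' q m s
        = Real.exp (∑ i, v j i * a i)
          * ∫ w : Fin q → ℝ, ∏ i, Real.exp (v j i * w i) ∂gaussPi' q m s :=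
      MeasureTheory.integral_const_mul _ _
    rw [h1, nu_expprod hs (v j), ← Real.exp_sum, ← Real.exp_add]
    congr 1
    rw [Finset.mul_sum, ← Finset.sum_add_distrib, ← Finset.sum_add_distrib]
    exact Finset.sum_congr rfl fun i _ => by ring
  have EQik : ∀ i k : Fin q,
      ∫ w, L⁻¹ i k * (w i * w k) ∂gaussPi' q m s
        = L⁻¹ i k * (m i * m k + if i = k then s i else 0) := by
    intro i k
    have h0 : ∫ w, L⁻¹ i k * (w i * w k) ∂gaussPi' q m s
        = L⁻¹ i k * ∫ w : Fin q → ℝ, w i * w k ∂gaussPi' q m s :=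
      MeasureTheory.integral_const_mul _ _
    rw [h0, nu_pair hs i k]
  have EQsum : ∫ w, (∑ i, ∑ k, L⁻¹ i k * (w i * w k)) ∂gaussPi' q m s
      = m ⬝ᵥ L⁻¹.mulVec m + ∑ i, L⁻¹ i i * s i := by
    have h1 : ∫ w, (∑ i, ∑ k, L⁻¹ i k * (w i * w k)) ∂gaussPi' q m s
        = ∑ i, ∫ w, (∑ k, L⁻¹ i k * (w i * w k)) ∂gaussPi' q m s :=
      integral_finset_sum _ fun i _ => integrable_finset_sum _ fun k _ => IQ i k
    have h2 : ∀ i : Fin q, ∫ w, (∑ k, L⁻¹ i k * (w i * w k)) ∂gaussPi' q m s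
        = ∑ k, ∫ w, L⁻¹ i k * (w i * w k) ∂gaussPi' q m s :=
      fun i => integral_finset_sum _ fun k _ => IQ i k
    rw [h1, Finset.sum_congr rfl fun i _ => h2 i,
      Finset.sum_congr rfl fun i _ =>
        Finset.sum_congr rfl fun k _ => EQik i k]
    have h3 : ∀ i k : Fin q, L⁻¹ i k * (m i * m k + if i = k then s i else 0)
        = L⁻¹ i k * (m i * m k) + (if i = k then L⁻¹ i k * s i else 0) := by
      intro i k
      by_cases h : i = k
      · simp [h, mul_add]
      · simp [h]
    simp only [h3, Finset.sum_add_distrib]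
    congr 1
    · rw [hQ m]
    · refine Finset.sum_congr rfl fun i _ => ?_
      rw [Finset.sum_ite_eq]
      simp
  -- the integrand decomposition for the first integral
  have hintegrand : (fun w : Fin q → ℝ =>
      (∑ j, ((x j : ℝ) * (∑ i, v j i * (a i + w i))
          - Real.exp (∑ i, v j i * (a i + w i))
          - Real.log (Nat.factorial (x j))))
        + Real.log ((2 * π) ^ (-(q : ℝ) / 2) * L.det ^ (-(1 : ℝ) / 2) *
            Real.exp (-(1 / 2) * (w ⬝ᵥ L⁻¹.mulVec w))) + c)
      = fun w : Fin q → ℝ =>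
        ((∑ j, (x j : ℝ) * (∑ i, v j i * (a i + w i)))
          - ∑ j, Real.exp (∑ i, v j i * (a i + w i)))
        + ((-(1 / 2 : ℝ)) * (∑ i, ∑ k, L⁻¹ i k * (w i * w k))
          + ((-(∑ j, Real.log (Nat.factorial (x j) : ℝ)))
            + ((-(q : ℝ) / 2) * Real.log (2 * π)
              + (-(1 : ℝ) / 2) * Real.log L.det + c))) := by
    funext w
    rw [hlog w, hQ w, Finset.sum_sub_distrib, Finset.sum_sub_distrib]
    ring
  -- value of the first integral
  have HJ1 : ∫ w, ((∑ j, ((x j : ℝ) * (∑ i, v j i * (a i + w i))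
          - Real.exp (∑ i, v j i * (a i + w i))
          - Real.log (Nat.factorial (x j))))
        + Real.log ((2 * π) ^ (-(q : ℝ) / 2) * L.det ^ (-(1 : ℝ) / 2) *
            Real.exp (-(1 / 2) * (w ⬝ᵥ L⁻¹.mulVec w))) + c) ∂gaussPi' q m s
      = ((∑ j, (x j : ℝ) * (∑ i, v j i * (a i + m i)))
          - ∑ j, Real.exp ((∑ i, v j i * (a i + m i)) + (1 / 2) * ∑ i, (v j i) ^ 2 * s i))
        + ((-(1 / 2 : ℝ)) * (m ⬝ᵥ L⁻¹.mulVec m + ∑ i, L⁻¹ i i * s i)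
          + ((-(∑ j, Real.log (Nat.factorial (x j) : ℝ)))
            + ((-(q : ℝ) / 2) * Real.log (2 * π)
              + (-(1 : ℝ) / 2) * Real.log L.det + c))) := by
    rw [hintegrand]
    have hI12 : Integrable (fun w : Fin q → ℝ =>
        (∑ j, (x j : ℝ) * (∑ i, v j i * (a i + w i)))
          - ∑ j, Real.exp (∑ i, v j i * (a i + w i))) (gaussPi' q m s) := IS1.sub IS2
    have hI34 : Integrable (fun w : Fin q → ℝ =>
        (-(1 / 2 : ℝ)) * (∑ i, ∑ k, L⁻¹ i k * (w i * w k))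
          + ((-(∑ j, Real.log (Nat.factorial (x j) : ℝ)))
            + ((-(q : ℝ) / 2) * Real.log (2 * π)
              + (-(1 : ℝ) / 2) * Real.log L.det + c))) (gaussPi' q m s) :=
      (IQsum.const_mul _).add (integrable_const _)
    have e1 : ∫ w, ((∑ j, (x j : ℝ) * (∑ i, v j i * (a i + w i)))
          - ∑ j, Real.exp (∑ i, v j i * (a i + w i))
        + ((-(1 / 2 : ℝ)) * (∑ i, ∑ k, L⁻¹ i k * (w i * w k))
          + ((-(∑ j, Real.log (Nat.factorial (x j) : ℝ)))
            + ((-(q : ℝ) / 2) * Real.log (2 * π)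
              + (-(1 : ℝ) / 2) * Real.log L.det + c)))) ∂gaussPi' q m s
        = (∫ w, ((∑ j, (x j : ℝ) * (∑ i, v j i * (a i + w i)))
          - ∑ j, Real.exp (∑ i, v j i * (a i + w i))) ∂gaussPi' q m s)
          + ∫ w, ((-(1 / 2 : ℝ)) * (∑ i, ∑ k, L⁻¹ i k * (w i * w k))
          + ((-(∑ j, Real.log (Nat.factorial (x j) : ℝ)))
            + ((-(q : ℝ) / 2) * Real.log (2 * π)
              + (-(1 : ℝ) / 2) * Real.log L.det + c))) ∂gaussPi' q m s :=
      integral_add hI12 hI34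
    have e2 : ∫ w, ((∑ j, (x j : ℝ) * (∑ i, v j i * (a i + w i)))
          - ∑ j, Real.exp (∑ i, v j i * (a i + w i))) ∂gaussPi' q m s
        = (∫ w, (∑ j, (x j : ℝ) * (∑ i, v j i * (a i + w i))) ∂gaussPi' q m s)
          - ∫ w, (∑ j, Real.exp (∑ i, v j i * (a i + w i))) ∂gaussPi' q m s :=
      integral_sub IS1 IS2
    have e3 : ∫ w, ((-(1 / 2 : ℝ)) * (∑ i, ∑ k, L⁻¹ i k * (w i * w k))
          + ((-(∑ j, Real.log (Nat.factorial (x j) : ℝ)))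
            + ((-(q : ℝ) / 2) * Real.log (2 * π)
              + (-(1 : ℝ) / 2) * Real.log L.det + c))) ∂gaussPi' q m s
        = (∫ w, ((-(1 / 2 : ℝ)) * (∑ i, ∑ k, L⁻¹ i k * (w i * w k))) ∂gaussPi' q m s)
          + ∫ _w : Fin q → ℝ, ((-(∑ j, Real.log (Nat.factorial (x j) : ℝ)))
            + ((-(q : ℝ) / 2) * Real.log (2 * π)
              + (-(1 : ℝ) / 2) * Real.log L.det + c)) ∂gaussPi' q m s :=
      integral_add (IQsum.const_mul _) (integrable_const _)
    have e4 : ∫ w, ((-(1 / 2 : ℝ)) * (∑ i, ∑ k, L⁻¹ i k * (w i * w k))) ∂gaussPi' q m s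
        = (-(1 / 2 : ℝ)) * ∫ w, (∑ i, ∑ k, L⁻¹ i k * (w i * w k)) ∂gaussPi' q m s :=
      MeasureTheory.integral_const_mul _ _
    have e5 : ∫ w, (∑ j, (x j : ℝ) * (∑ i, v j i * (a i + w i))) ∂gaussPi' q m s
        = ∑ j, (x j : ℝ) * (∑ i, v j i * (a i + m i)) := by
      have h := integral_finset_sum (μ := gaussPi' q m s) Finset.univ
        (f := fun (j : Fin p) (w : Fin q → ℝ) =>
          (x j : ℝ) * (∑ i, v j i * (a i + w i))) (fun j _ => Ilin j)
      rw [h]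
      exact Finset.sum_congr rfl fun j _ => Elin j
    have e6 : ∫ w, (∑ j, Real.exp (∑ i, v j i * (a i + w i))) ∂gaussPi' q m s
        = ∑ j, Real.exp ((∑ i, v j i * (a i + m i)) + (1 / 2) * ∑ i, (v j i) ^ 2 * s i) := by
      have h := integral_finset_sum (μ := gaussPi' q m s) Finset.univ
        (f := fun (j : Fin p) (w : Fin q → ℝ) =>
          Real.exp (∑ i, v j i * (a i + w i))) (fun j _ => Iexpj j)
      rw [h]
      exact Finset.sum_congr rfl fun j _ => Eexpj j
    rw [e1, e2, e3, e4, e5, e6, EQsum, integral_const]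
    simp [measure_univ]
  -- the second integral
  have hlogg : ∀ w : Fin q → ℝ,
      Real.log (∏ i, (Real.sqrt (2 * π * s i))⁻¹ *
        Real.exp (-(w i - m i) ^ 2 / (2 * s i)))
      = ∑ i, (-Real.log (Real.sqrt (2 * π * s i))
          + (-(2 * s i)⁻¹) * (w i - m i) ^ 2) := by
    intro w
    rw [Real.log_prod (fun i _ => by have := hs i; positivity)]
    refine Finset.sum_congr rfl fun i _ => ?_
    rw [Real.log_mul (by have := hs i; positivity) (Real.exp_ne_zero _),
      Real.log_inv, Real.log_exp]
    ring
  have HJ2 : ∫ w, Real.log (∏ i, (Real.sqrt (2 * π * s i))⁻¹ *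
        Real.exp (-(w i - m i) ^ 2 / (2 * s i))) ∂gaussPi' q m s
      = -((q : ℝ) * Real.log (2 * π)) / 2 - (∑ i, Real.log (s i)) / 2 - (q : ℝ) / 2 := by
    have h0 : (fun w : Fin q → ℝ => Real.log (∏ i, (Real.sqrt (2 * π * s i))⁻¹ *
        Real.exp (-(w i - m i) ^ 2 / (2 * s i))))
        = fun w : Fin q → ℝ => ∑ i, (-Real.log (Real.sqrt (2 * π * s i))
          + (-(2 * s i)⁻¹) * (w i - m i) ^ 2) := funext hlogg
    rw [h0]
    have h1 : ∫ w, (∑ i, (-Real.log (Real.sqrt (2 * π * s i))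
          + (-(2 * s i)⁻¹) * (w i - m i) ^ 2)) ∂gaussPi' q m s
        = ∑ i, ∫ w, (-Real.log (Real.sqrt (2 * π * s i))
          + (-(2 * s i)⁻¹) * (w i - m i) ^ 2) ∂gaussPi' q m s :=
      integral_finset_sum _ fun i _ =>
        (integrable_const _).add ((nu_int_sqdev hs i).const_mul _)
    rw [h1]
    have h2 : ∀ i : Fin q, ∫ w, (-Real.log (Real.sqrt (2 * π * s i))
          + (-(2 * s i)⁻¹) * (w i - m i) ^ 2) ∂gaussPi' q m s
        = -Real.log (Real.sqrt (2 * π * s i)) + (-(2 * s i)⁻¹) * s i := by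
      intro i
      have ha : ∫ w, (-Real.log (Real.sqrt (2 * π * s i))
            + (-(2 * s i)⁻¹) * (w i - m i) ^ 2) ∂gaussPi' q m s
          = (∫ _w : Fin q → ℝ, -Real.log (Real.sqrt (2 * π * s i)) ∂gaussPi' q m s)
            + ∫ w : Fin q → ℝ, (-(2 * s i)⁻¹) * (w i - m i) ^ 2 ∂gaussPi' q m s :=
        integral_add (integrable_const _) ((nu_int_sqdev hs i).const_mul _)
      have hb : ∫ w : Fin q → ℝ, (-(2 * s i)⁻¹) * (w i - m i) ^ 2 ∂gaussPi' q m s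
          = (-(2 * s i)⁻¹) * ∫ w : Fin q → ℝ, (w i - m i) ^ 2 ∂gaussPi' q m s :=
        MeasureTheory.integral_const_mul _ _
      rw [ha, hb, nu_sqdev hs i, integral_const]
      simp [measure_univ]
    rw [Finset.sum_congr rfl fun i _ => h2 i]
    have hper : ∀ i : Fin q, -Real.log (Real.sqrt (2 * π * s i)) + (-(2 * s i)⁻¹) * s i
        = -(Real.log (2 * π)) / 2 - Real.log (s i) / 2 - 1 / 2 := by
      intro i
      rw [Real.log_sqrt (by have := hs i; positivity),
        Real.log_mul (by positivity) (ne_of_gt (hs i))]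
      have h2s : (2 * s i) ≠ 0 := by have := hs i; positivity
      have hsi : s i ≠ 0 := (hs i).ne'
      field_simp
      ring
    rw [Finset.sum_congr rfl fun i _ => hper i]
    simp only [Finset.sum_sub_distrib, Finset.sum_const, Finset.card_univ,
      Fintype.card_fin, nsmul_eq_mul, ← Finset.sum_div]
    ring
  rw [HJ1, HJ2]
  ring
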